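/- Let A₁ ∈ ℂ^{m×n}, b₁ ∈ ℂ^m, A₂ ∈ ℂ^{k×n} with rank(A₂) = k ≥ 1, b₂ ∈ ℂ^k. Define P_{X,Y} := (A₁(I − A₂†A₂))†A₁ and P_{Y,X} := I − P_{X,Y}. Then: (i) P_{X,Y} is idempotent with range X := N(A₂) ∩ (N(A₂) ∩ N(A₁))⊥ and null space Y := N(A₁) ⊕ (A₁*A₁)†((N(A₁) + N(A₂))⊥), where (A₁*A₁)†(S) denotes the image of the subspace S under the linear map given by (A₁*A₁)†; and (ii) if x ∈ ℂ^n minimizes ‖A₁x − b₁‖² over all x satisfying A₂x = b₂, then there exists z ∈ N(A₁) ∩ N(A₂) such that x = A₁†b₁ + P_{Y,X}(A₂†b₂ − A₁†b₁) + z. -/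

import Mathlib

open Matrix
open scoped InnerProductSpace

/-- The four Penrose conditions characterizing the Moore-Penrose inverse. -/
def IsMoorePenrose {m n : ℕ} (A : Matrix (Fin m) (Fin n) ℂ)
    (X : Matrix (Fin n) (Fin m) ℂ) : Prop :=
  A * X * A = A ∧ X * A * X = X ∧ (A * X)ᴴ = A * X ∧ (X * A)ᴴ = X * A

/-- The range (column space) of a matrix, as a subspace of Euclidean space. -/
noncomputable def mrange {m n : ℕ} (A : Matrix (Fin m) (Fin n) ℂ) :
    Submodule ℂ (EuclideanSpace ℂ (Fin m)) :=
  LinearMap.range (Matrix.toEuclideanLin A)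

/-- The null space of a matrix, as a subspace of Euclidean space. -/
noncomputable def mker {m n : ℕ} (A : Matrix (Fin m) (Fin n) ℂ) :
    Submodule ℂ (EuclideanSpace ℂ (Fin n)) :=
  LinearMap.ker (Matrix.toEuclideanLin A)

section Aux
variable {p q r : ℕ}

lemma eL_mul (X : Matrix (Fin p) (Fin q) ℂ) (Y : Matrix (Fin q) (Fin r) ℂ)
    (v : EuclideanSpace ℂ (Fin r)) :
    Matrix.toEuclideanLin (X * Y) v
      = Matrix.toEuclideanLin X (Matrix.toEuclideanLin Y v) := by
  simp [Matrix.toEuclideanLin_apply, Matrix.mulVec_mulVec]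

lemma eL_one (v : EuclideanSpace ℂ (Fin p)) :
    Matrix.toEuclideanLin (1 : Matrix (Fin p) (Fin p) ℂ) v = v := by
  simp [Matrix.toEuclideanLin_apply]

lemma eL_sub (X Y : Matrix (Fin p) (Fin q) ℂ) (v : EuclideanSpace ℂ (Fin q)) :
    Matrix.toEuclideanLin (X - Y) v
      = Matrix.toEuclideanLin X v - Matrix.toEuclideanLin Y v := by
  simp [map_sub]

lemma eL_zero (v : EuclideanSpace ℂ (Fin q)) :
    Matrix.toEuclideanLin (0 : Matrix (Fin p) (Fin q) ℂ) v = 0 := by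
  simp [map_zero]

set_option maxHeartbeats 2000000 in
lemma inner_eLconjT (A : Matrix (Fin p) (Fin q) ℂ) (y : EuclideanSpace ℂ (Fin p))
    (x : EuclideanSpace ℂ (Fin q)) :
    ⟪Matrix.toEuclideanLin Aᴴ y, x⟫_ℂ = ⟪y, Matrix.toEuclideanLin A x⟫_ℂ := by
  simp only [Matrix.toEuclideanLin_apply, PiLp.inner_apply, RCLike.inner_apply,
    Matrix.mulVec, dotProduct,
    Matrix.conjTranspose_apply, map_sum,
    Finset.sum_mul, Finset.mul_sum]
  rw [Finset.sum_comm]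
  apply Finset.sum_congr rfl; intro i _
  apply Finset.sum_congr rfl; intro j _
  rw [show star (A i j) = (starRingEnd ℂ) (A i j) from rfl, _root_.map_mul,
    Complex.conj_conj]
  ring

lemma mker_eq_orth (A : Matrix (Fin p) (Fin q) ℂ) : mker A = (mrange Aᴴ)ᗮ := by
  ext x
  constructor
  · intro hx
    rw [Submodule.mem_orthogonal]
    rintro u ⟨y, rfl⟩
    rw [inner_eLconjT]
    rw [mker, LinearMap.mem_ker] at hx
    rw [hx, inner_zero_right]
  · intro hx
    rw [Submodule.mem_orthogonal] at hx
    have h := hx (Matrix.toEuclideanLin Aᴴ (Matrix.toEuclideanLin A x)) ⟨_, rfl⟩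
    rw [inner_eLconjT] at h
    rw [mker, LinearMap.mem_ker]
    exact inner_self_eq_zero.mp h

lemma mrange_conjT (A : Matrix (Fin p) (Fin q) ℂ) : mrange Aᴴ = (mker A)ᗮ := by
  rw [mker_eq_orth, Submodule.orthogonal_orthogonal]

end Aux

open scoped ComplexOrder in
lemma ctms_zero {p q : ℕ} {A : Matrix (Fin p) (Fin q) ℂ} (h : Aᴴ * A = 0) : A = 0 :=
  Matrix.conjTranspose_mul_self_eq_zero.mp h

def IsMP {p q : ℕ} (A : Matrix (Fin p) (Fin q) ℂ)
    (X : Matrix (Fin q) (Fin p) ℂ) : Prop :=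
  A * X * A = A ∧ X * A * X = X ∧ (A * X)ᴴ = A * X ∧ (X * A)ᴴ = X * A

section Aux2
variable {p q : ℕ}

lemma mp_conjT {A : Matrix (Fin p) (Fin q) ℂ} {X : Matrix (Fin q) (Fin p) ℂ}
    (h : IsMP A X) : IsMP Aᴴ Xᴴ := by
  obtain ⟨h1, h2, h3, h4⟩ := h
  refine ⟨?_, ?_, ?_, ?_⟩
  · rw [← Matrix.conjTranspose_mul, ← Matrix.conjTranspose_mul, ← Matrix.mul_assoc, h1]
  · rw [← Matrix.conjTranspose_mul, ← Matrix.conjTranspose_mul, ← Matrix.mul_assoc, h2]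
  · rw [← Matrix.conjTranspose_mul, h4, h4]
  · rw [← Matrix.conjTranspose_mul, h3, h3]

lemma mp_unique {A : Matrix (Fin p) (Fin q) ℂ} {X Y : Matrix (Fin q) (Fin p) ℂ}
    (hX : IsMP A X) (hY : IsMP A Y) : X = Y := by
  obtain ⟨x1, x2, x3, x4⟩ := hX
  obtain ⟨y1, y2, y3, y4⟩ := hY
  have hAX : A * X = A * Y := by
    have e1 : (A * Y) * (A * X) = A * X := by
      rw [← Matrix.mul_assoc, Matrix.mul_assoc A Y A, ← Matrix.mul_assoc A Y A, y1]
    have e2 : (A * Y) * (A * X) = A * Y := by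
      calc (A * Y) * (A * X) = (A * Y)ᴴ * (A * X)ᴴ := by rw [y3, x3]
      _ = ((A * X) * (A * Y))ᴴ := by rw [Matrix.conjTranspose_mul (A * X) (A * Y)]
      _ = ((A * X * A) * Y)ᴴ := by rw [Matrix.mul_assoc (A * X) A Y]
      _ = (A * Y)ᴴ := by rw [x1]
      _ = A * Y := y3
    rw [← e1, e2]
  have hXA : X * A = Y * A := by
    have e1 : (X * A) * (Y * A) = X * A := by
      rw [Matrix.mul_assoc X A (Y * A), ← Matrix.mul_assoc A Y A, y1]
    have e2 : (X * A) * (Y * A) = Y * A := by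
      calc (X * A) * (Y * A) = (X * A)ᴴ * (Y * A)ᴴ := by rw [x4, y4]
      _ = ((Y * A) * (X * A))ᴴ := by rw [Matrix.conjTranspose_mul (Y * A) (X * A)]
      _ = (Y * (A * X * A))ᴴ := by
          rw [Matrix.mul_assoc Y A (X * A), ← Matrix.mul_assoc A X A]
      _ = (Y * A)ᴴ := by rw [x1]
      _ = Y * A := y4
    rw [← e1, e2]
  calc X = X * A * X := x2.symm
  _ = Y * A * X := by rw [hXA]
  _ = Y * (A * X) := by rw [Matrix.mul_assoc]
  _ = Y * (A * Y) := by rw [hAX]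
  _ = Y * A * Y := by rw [Matrix.mul_assoc]
  _ = Y := y2

lemma aux_min {F : Type*} [NormedAddCommGroup F] [InnerProductSpace ℂ F] (r u : F)
    (h : ∀ t : ℂ, ‖r‖ ^ 2 ≤ ‖r - t • u‖ ^ 2) : ⟪u, r⟫_ℂ = 0 := by
  by_contra hc
  have hu : u ≠ 0 := by rintro rfl; simp at hc
  have hun : (0:ℝ) < ‖u‖ ^ 2 := by
    have := norm_pos_iff.mpr hu; positivity
  set c : ℂ := ⟪u, r⟫_ℂ with hcdef
  have hnc : (0:ℝ) < Complex.normSq c := Complex.normSq_pos.mpr hc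
  have h' := h ((((‖u‖ : ℝ) ^ 2)⁻¹ : ℝ) • c)
  rw [norm_sub_sq (𝕜 := ℂ)] at h'
  have hir : ⟪r, ((((‖u‖:ℝ) ^ 2)⁻¹ : ℝ) • c) • u⟫_ℂ
      = ((((‖u‖:ℝ) ^ 2)⁻¹ * Complex.normSq c : ℝ) : ℂ) := by
    rw [inner_smul_right]
    have hru : ⟪r, u⟫_ℂ = (starRingEnd ℂ) c := by rw [hcdef, ← inner_conj_symm]
    rw [hru, Complex.real_smul, mul_assoc, Complex.mul_conj]
    push_cast
    ring
  have hs : ‖((((‖u‖:ℝ) ^ 2)⁻¹ : ℝ) • c) • u‖ ^ 2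
      = (((‖u‖:ℝ) ^ 2)⁻¹ : ℝ) * Complex.normSq c := by
    rw [norm_smul, norm_smul, mul_pow, mul_pow]
    rw [show ‖c‖ ^ 2 = Complex.normSq c by
      rw [Complex.sq_norm]]
    rw [Real.norm_eq_abs, abs_of_pos (inv_pos.mpr hun)]
    rw [pow_two ((‖u‖ ^ 2 : ℝ)⁻¹)]
    field_simp
  rw [hir, hs] at h'
  simp only [RCLike.re_to_complex, Complex.ofReal_re] at h'
  nlinarith [mul_pos (inv_pos.mpr hun) hnc]

set_option maxHeartbeats 4000000 in
/-- With `P_{X,Y} := (A₁(I − A₂†A₂))†A₁` and `P_{Y,X} := I − P_{X,Y}`: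
(i) `P_{X,Y}` is idempotent with range `X = N(A₂) ∩ (N(A₂) ∩ N(A₁))⊥` and null space
`Y = N(A₁) ⊕ (A₁*A₁)†((N(A₁) + N(A₂))⊥)` (an internal direct sum); (ii) any minimizer of
`‖A₁x − b₁‖²` subject to `A₂x = b₂` equals `A₁†b₁ + P_{Y,X}(A₂†b₂ − A₁†b₁) + z` for some
`z ∈ N(A₁) ∩ N(A₂)`. -/
theorem stmt17 {m n k : ℕ}
    (A₁ : Matrix (Fin m) (Fin n) ℂ) (b₁ : EuclideanSpace ℂ (Fin m))
    (A₂ : Matrix (Fin k) (Fin n) ℂ) (b₂ : EuclideanSpace ℂ (Fin k))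
    (hk : 1 ≤ k) (hA₂ : A₂.rank = k)
    (A₁d : Matrix (Fin n) (Fin m) ℂ) (hA₁d : IsMoorePenrose A₁ A₁d)
    (A₂d : Matrix (Fin n) (Fin k) ℂ) (hA₂d : IsMoorePenrose A₂ A₂d)
    (G : Matrix (Fin n) (Fin m) ℂ) (hG : IsMoorePenrose (A₁ * (1 - A₂d * A₂)) G)
    (W : Matrix (Fin n) (Fin n) ℂ) (hW : IsMoorePenrose (A₁ᴴ * A₁) W) :
    ((G * A₁) * (G * A₁) = G * A₁ ∧
      mrange (G * A₁) = mker A₂ ⊓ (mker A₂ ⊓ mker A₁)ᗮ ∧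
      mker (G * A₁) =
        mker A₁ ⊔ Submodule.map (Matrix.toEuclideanLin W) ((mker A₁ ⊔ mker A₂)ᗮ) ∧
      mker A₁ ⊓ Submodule.map (Matrix.toEuclideanLin W) ((mker A₁ ⊔ mker A₂)ᗮ) = ⊥) ∧
    ∀ x : EuclideanSpace ℂ (Fin n), Matrix.toEuclideanLin A₂ x = b₂ →
      (∀ y : EuclideanSpace ℂ (Fin n), Matrix.toEuclideanLin A₂ y = b₂ →
        ‖Matrix.toEuclideanLin A₁ x - b₁‖ ^ 2 ≤ ‖Matrix.toEuclideanLin A₁ y - b₁‖ ^ 2) →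
      ∃ z ∈ mker A₁ ⊓ mker A₂,
        x = Matrix.toEuclideanLin A₁d b₁ +
          Matrix.toEuclideanLin (1 - G * A₁)
            (Matrix.toEuclideanLin A₂d b₂ - Matrix.toEuclideanLin A₁d b₁) + z := by
  classical
  obtain ⟨g1, g2, g3, g4⟩ := hG
  obtain ⟨a1, a2, a3, a4⟩ := hA₁d
  obtain ⟨c1, c2, c3, c4⟩ := hA₂d
  obtain ⟨w1, w2, w3, w4⟩ := hW
  set Q : Matrix (Fin n) (Fin n) ℂ := A₂d * A₂ with hQdef
  set B : Matrix (Fin m) (Fin n) ℂ := A₁ * (1 - Q) with hBdef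
  set T : Matrix (Fin n) (Fin n) ℂ := A₁ᴴ * A₁ with hTdef
  -- basic identities
  have hQh : Qᴴ = Q := c4
  have hQQ : Q * Q = Q := by
    rw [hQdef, Matrix.mul_assoc A₂d A₂ (A₂d * A₂), ← Matrix.mul_assoc A₂ A₂d A₂, c1]
  have hBh : Bᴴ = (1 - Q) * A₁ᴴ := by
    rw [hBdef, Matrix.conjTranspose_mul]
    congr 1
    rw [Matrix.conjTranspose_sub, Matrix.conjTranspose_one, hQh]
  have hQ1 : (1 - Q) * (1 - Q) = 1 - Q := by
    have h : (1 - Q) * (1 - Q) = 1 - Q - Q + Q * Q := by noncomm_ring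
    rw [h, hQQ]
    abel
  have hQBh : (1 - Q) * Bᴴ = Bᴴ := by
    rw [hBh, ← Matrix.mul_assoc, hQ1]
  have hG3 : G = Bᴴ * (Gᴴ * G) := by
    calc G = G * B * G := g2.symm
    _ = (G * B)ᴴ * G := by rw [g4]
    _ = (Bᴴ * Gᴴ) * G := by rw [Matrix.conjTranspose_mul]
    _ = Bᴴ * (Gᴴ * G) := by rw [Matrix.mul_assoc]
  have hQG : (1 - Q) * G = G := by
    conv_lhs => rw [hG3]
    rw [← Matrix.mul_assoc, hQBh, ← hG3]
  have hAG : A₁ * G = B * G := by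
    rw [hBdef, Matrix.mul_assoc, hQG]
  have hPP : (G * A₁) * (G * A₁) = G * A₁ := by
    calc (G * A₁) * (G * A₁) = G * (A₁ * G) * A₁ := by
          rw [Matrix.mul_assoc, Matrix.mul_assoc, Matrix.mul_assoc]
    _ = G * B * G * A₁ := by rw [hAG, ← Matrix.mul_assoc, ← Matrix.mul_assoc]
    _ = G * A₁ := by rw [g2]
  have hBh2 : Bᴴ * (B * G) = Bᴴ := by
    calc Bᴴ * (B * G) = Bᴴ * (B * G)ᴴ := by rw [g3]
    _ = ((B * G) * B)ᴴ := by rw [Matrix.conjTranspose_mul (B * G) B]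
    _ = Bᴴ := by rw [g1]
  have hGBh : G = (G * Gᴴ) * Bᴴ := by
    calc G = G * (B * G) := by rw [← Matrix.mul_assoc, g2]
    _ = G * (B * G)ᴴ := by rw [g3]
    _ = G * (Gᴴ * Bᴴ) := by rw [Matrix.conjTranspose_mul B G]
    _ = (G * Gᴴ) * Bᴴ := by rw [Matrix.mul_assoc]
  have hGBBh : (G * B) * Bᴴ = Bᴴ := by
    calc (G * B) * Bᴴ = (G * B)ᴴ * Bᴴ := by rw [g4]
    _ = (B * (G * B))ᴴ := by rw [Matrix.conjTranspose_mul B (G * B)]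
    _ = Bᴴ := by rw [← Matrix.mul_assoc, g1]
  have hA₂Q : A₂ * (1 - Q) = 0 := by
    rw [Matrix.mul_sub, Matrix.mul_one, hQdef, ← Matrix.mul_assoc, c1, sub_self]
  have hA₂G : A₂ * G = 0 := by
    rw [← hQG, ← Matrix.mul_assoc, hA₂Q, Matrix.zero_mul]
  have hQA₂h : Q * A₂ᴴ = A₂ᴴ := by
    calc Q * A₂ᴴ = Qᴴ * A₂ᴴ := by rw [hQh]
    _ = (A₂ * Q)ᴴ := by rw [Matrix.conjTranspose_mul A₂ Q]
    _ = A₂ᴴ := by rw [hQdef, ← Matrix.mul_assoc, c1]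
  have hA₂dr : A₂d = A₂ᴴ * (A₂dᴴ * A₂d) := by
    calc A₂d = A₂d * A₂ * A₂d := c2.symm
    _ = (A₂d * A₂)ᴴ * A₂d := by rw [c4]
    _ = (A₂ᴴ * A₂dᴴ) * A₂d := by rw [Matrix.conjTranspose_mul A₂d A₂]
    _ = A₂ᴴ * (A₂dᴴ * A₂d) := by rw [Matrix.mul_assoc]
  have hA1h : T * A₁d = A₁ᴴ := by
    calc T * A₁d = A₁ᴴ * (A₁ * A₁d) := by rw [hTdef, Matrix.mul_assoc]
    _ = A₁ᴴ * (A₁ * A₁d)ᴴ := by rw [a3]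
    _ = A₁ᴴ * (A₁dᴴ * A₁ᴴ) := by rw [Matrix.conjTranspose_mul A₁ A₁d]
    _ = ((A₁ * A₁d) * A₁)ᴴ := by
        rw [Matrix.conjTranspose_mul (A₁ * A₁d) A₁, Matrix.conjTranspose_mul A₁ A₁d]
    _ = A₁ᴴ := by rw [a1]
  have hTh : Tᴴ = T := by
    rw [hTdef, Matrix.conjTranspose_mul, Matrix.conjTranspose_conjTranspose]
  have hWh : Wᴴ = W := by
    have h1 : IsMP T W := ⟨w1, w2, w3, w4⟩
    have h2 : IsMP T Wᴴ := by
      have h3 := mp_conjT h1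
      rwa [hTh] at h3
    exact mp_unique h2 h1
  have hTW : T * W = W * T := by
    calc T * W = (T * W)ᴴ := w3.symm
    _ = Wᴴ * Tᴴ := by rw [Matrix.conjTranspose_mul]
    _ = W * T := by rw [hWh, hTh]
  have hTWT : T * (W * T) = T := by rw [← Matrix.mul_assoc, w1]
  have hAWT : A₁ * (W * T) = A₁ := by
    have key : ((W * T) * A₁ᴴ - A₁ᴴ) * (A₁ * (W * T) - A₁) = 0 := by
      rw [Matrix.sub_mul, Matrix.mul_sub, Matrix.mul_sub]
      have e2 : A₁ᴴ * (A₁ * (W * T)) = T := by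
        rw [← Matrix.mul_assoc, ← hTdef, hTWT]
      have e3 : ((W * T) * A₁ᴴ) * (A₁ * (W * T)) = (W * T) * T := by
        rw [Matrix.mul_assoc (W * T) A₁ᴴ (A₁ * (W * T)), e2]
      have e4 : ((W * T) * A₁ᴴ) * A₁ = (W * T) * T := by
        rw [Matrix.mul_assoc (W * T) A₁ᴴ A₁, ← hTdef]
      rw [e3, e4, e2, ← hTdef]
      abel
    have hM : (A₁ * (W * T) - A₁)ᴴ * (A₁ * (W * T) - A₁) = 0 := by
      rw [Matrix.conjTranspose_sub, Matrix.conjTranspose_mul A₁ (W * T), w4]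
      exact key
    have h0 := ctms_zero hM
    have := sub_eq_zero.mp h0
    exact this
  have hTWAh : (T * W) * A₁ᴴ = A₁ᴴ := by
    rw [← hA1h, ← Matrix.mul_assoc (T * W) T A₁d, w1]
  have hBhA1 : Bᴴ * A₁ = (Bᴴ * B) * (G * A₁) := by
    calc Bᴴ * A₁ = (Bᴴ * (B * G)) * A₁ := by rw [hBh2]
    _ = (Bᴴ * B) * (G * A₁) := by
        rw [← Matrix.mul_assoc Bᴴ B G, Matrix.mul_assoc (Bᴴ * B) G A₁]
  have hQT : (1 - Q) * T = Bᴴ * A₁ := by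
    rw [hTdef, ← Matrix.mul_assoc, ← hBh]
  have hBG' : B * G = Gᴴ * Bᴴ := by
    conv_lhs => rw [← g3]
    rw [Matrix.conjTranspose_mul]
  have hA₁P : A₁ * (G * A₁) = B * (G * A₁) := by
    rw [← Matrix.mul_assoc, hAG, Matrix.mul_assoc]
  have hQr : A₂ᴴ * ((A₂dᴴ * A₂d) * A₂) = Q := by
    rw [← Matrix.mul_assoc, ← hA₂dr, ← hQdef]
  have hBA₂h : B * A₂ᴴ = 0 := by
    rw [hBdef, Matrix.mul_assoc, Matrix.sub_mul, Matrix.one_mul, hQA₂h, sub_self,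
      Matrix.mul_zero]
  have hker_B : mker B = (mker A₂ ⊓ mker A₁) ⊔ (mker A₂)ᗮ := by
    apply le_antisymm
    · intro x hx
      have hx' : Matrix.toEuclideanLin B x = 0 := hx
      have hdec : x = (x - Matrix.toEuclideanLin Q x) + Matrix.toEuclideanLin Q x := by
        abel
      rw [hdec]
      apply Submodule.add_mem_sup
      · have h1q : x - Matrix.toEuclideanLin Q x = Matrix.toEuclideanLin (1 - Q) x := by
          rw [eL_sub, eL_one]
        rw [Submodule.mem_inf]
        constructor
        · rw [mker, LinearMap.mem_ker, h1q, ← eL_mul, hA₂Q]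
          exact eL_zero x
        · rw [mker, LinearMap.mem_ker, h1q, ← eL_mul, ← hBdef]
          exact hx'
      · rw [← mrange_conjT]
        exact ⟨Matrix.toEuclideanLin ((A₂dᴴ * A₂d) * A₂) x, by rw [← eL_mul, hQr]⟩
    · apply sup_le
      · intro x hx
        rw [Submodule.mem_inf, mker, mker, LinearMap.mem_ker, LinearMap.mem_ker] at hx
        rw [mker, LinearMap.mem_ker, hBdef, eL_mul, eL_sub, eL_one]
        rw [hQdef, eL_mul, hx.1, map_zero, sub_zero]
        exact hx.2
      · intro x hx
        rw [← mrange_conjT] at hx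
        obtain ⟨y, rfl⟩ := hx
        rw [mker, LinearMap.mem_ker, ← eL_mul, hBA₂h]
        exact eL_zero y
  have hrange : mrange (G * A₁) = mrange Bᴴ := by
    apply le_antisymm
    · rintro _ ⟨x, rfl⟩
      exact ⟨Matrix.toEuclideanLin ((Gᴴ * G) * A₁) x, by
        rw [← eL_mul, ← Matrix.mul_assoc, ← hG3]⟩
    · rintro _ ⟨x, rfl⟩
      refine ⟨Matrix.toEuclideanLin ((1 - Q) * Bᴴ) x, ?_⟩
      have hid : (G * A₁) * ((1 - Q) * Bᴴ) = Bᴴ := by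
        calc (G * A₁) * ((1 - Q) * Bᴴ) = ((G * A₁) * (1 - Q)) * Bᴴ := by
              simp only [Matrix.mul_assoc]
        _ = (G * B) * Bᴴ := by rw [Matrix.mul_assoc G A₁ (1 - Q), ← hBdef]
        _ = Bᴴ := hGBBh
      rw [← eL_mul, hid]
  have goal_range : mrange (G * A₁) = mker A₂ ⊓ (mker A₂ ⊓ mker A₁)ᗮ := by
    rw [hrange, mrange_conjT, hker_B, ← Submodule.inf_orthogonal,
      Submodule.orthogonal_orthogonal, inf_comm]
  have hfact1 : ∀ v ∈ (mker A₁)ᗮ, Matrix.toEuclideanLin (T * W) v = v := by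
    intro v hv
    rw [← mrange_conjT] at hv
    obtain ⟨u, rfl⟩ := hv
    rw [← eL_mul, hTWAh]
  have hfact2 : ∀ v ∈ (mker A₂)ᗮ, Matrix.toEuclideanLin Q v = v := by
    intro v hv
    rw [← mrange_conjT] at hv
    obtain ⟨u, rfl⟩ := hv
    rw [← eL_mul, hQA₂h]
  have goal_ker : mker (G * A₁) =
      mker A₁ ⊔ Submodule.map (Matrix.toEuclideanLin W) ((mker A₁ ⊔ mker A₂)ᗮ) := by
    apply le_antisymm
    · intro x hx
      have hx' : Matrix.toEuclideanLin (G * A₁) x = 0 := hx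
      have hdec : x = (x - Matrix.toEuclideanLin (W * T) x)
          + Matrix.toEuclideanLin (W * T) x := by abel
      rw [hdec]
      apply Submodule.add_mem_sup
      · rw [mker, LinearMap.mem_ker, map_sub, ← eL_mul, hAWT, sub_self]
      · refine Submodule.mem_map.mpr ⟨Matrix.toEuclideanLin T x, ?_, ?_⟩
        · rw [← Submodule.inf_orthogonal, Submodule.mem_inf]
          constructor
          · rw [← mrange_conjT]
            exact ⟨Matrix.toEuclideanLin A₁ x, by rw [← eL_mul, ← hTdef]⟩
          · rw [← mrange_conjT]
            have h0 : Matrix.toEuclideanLin ((1 - Q) * T) x = 0 := by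
              rw [hQT, hBhA1, eL_mul, hx', map_zero]
            rw [eL_mul, eL_sub, eL_one, sub_eq_zero] at h0
            exact ⟨Matrix.toEuclideanLin ((A₂dᴴ * A₂d) * A₂) (Matrix.toEuclideanLin T x),
              by rw [← eL_mul, hQr, ← h0]⟩
        · exact (eL_mul W T x).symm
    · apply sup_le
      · intro x hx
        rw [mker, LinearMap.mem_ker] at hx ⊢
        rw [eL_mul, hx, map_zero]
      · intro xx hxx
        obtain ⟨v, hv, rfl⟩ := Submodule.mem_map.mp hxx
        rw [← Submodule.inf_orthogonal, Submodule.mem_inf] at hv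
        obtain ⟨hv1, hv2⟩ := hv
        rw [mker, LinearMap.mem_ker, ← eL_mul]
        have hid2 : (G * A₁) * W = (G * Gᴴ) * ((1 - Q) * (T * W)) := by
          conv_lhs => rw [hGBh]
          calc (((G * Gᴴ) * Bᴴ) * A₁) * W = (G * Gᴴ) * ((Bᴴ * A₁) * W) := by
                simp only [Matrix.mul_assoc]
          _ = (G * Gᴴ) * (((1 - Q) * T) * W) := by rw [← hQT]
          _ = (G * Gᴴ) * ((1 - Q) * (T * W)) := by rw [Matrix.mul_assoc (1 - Q) T W]
        rw [hid2, eL_mul (G * Gᴴ) ((1 - Q) * (T * W)) v, eL_mul (1 - Q) (T * W) v,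
          hfact1 v hv1, eL_sub, eL_one, hfact2 v hv2, sub_self, map_zero]
  have goal_disj : mker A₁ ⊓
      Submodule.map (Matrix.toEuclideanLin W) ((mker A₁ ⊔ mker A₂)ᗮ) = ⊥ := by
    rw [eq_bot_iff]
    intro x hx
    rw [Submodule.mem_inf] at hx
    obtain ⟨hx1, hx2⟩ := hx
    obtain ⟨v, hv, rfl⟩ := Submodule.mem_map.mp hx2
    rw [← Submodule.inf_orthogonal, Submodule.mem_inf] at hv
    have h1 : Matrix.toEuclideanLin (T * W) v = v := hfact1 v hv.1
    rw [eL_mul T W v, hTdef, eL_mul A₁ᴴ A₁ (Matrix.toEuclideanLin W v)] at h1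
    rw [mker, LinearMap.mem_ker] at hx1
    rw [hx1, map_zero] at h1
    rw [Submodule.mem_bot, ← h1, map_zero]
  refine ⟨⟨hPP, goal_range, goal_ker, goal_disj⟩, ?_⟩
  intro x hxfeas hxmin
  set r : EuclideanSpace ℂ (Fin m) := Matrix.toEuclideanLin A₁ x - b₁ with hrdef
  have hkey : ∀ w : EuclideanSpace ℂ (Fin n), Matrix.toEuclideanLin A₂ w = 0 →
      ⟪Matrix.toEuclideanLin A₁ w, r⟫_ℂ = 0 := by
    intro w hw
    apply aux_min
    intro t
    have hfeas' : Matrix.toEuclideanLin A₂ (x - t • w) = b₂ := by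
      rw [map_sub, LinearMap.map_smul, hw, smul_zero, sub_zero, hxfeas]
    have hmin := hxmin (x - t • w) hfeas'
    have e : Matrix.toEuclideanLin A₁ (x - t • w) - b₁
        = r - t • Matrix.toEuclideanLin A₁ w := by
      rw [map_sub, LinearMap.map_smul, hrdef]
      abel
    rw [e] at hmin
    exact hmin
  have horth : Matrix.toEuclideanLin Bᴴ r = 0 := by
    set yv := Matrix.toEuclideanLin A₁ᴴ r with hyv
    have hwker : Matrix.toEuclideanLin A₂ (Matrix.toEuclideanLin (1 - Q) yv) = 0 := by
      rw [← eL_mul, hA₂Q]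
      exact eL_zero yv
    have h0 := hkey _ hwker
    have h1 : ⟪Matrix.toEuclideanLin (1 - Q) yv, yv⟫_ℂ = 0 := by
      have hadj := inner_eLconjT A₁ r (Matrix.toEuclideanLin (1 - Q) yv)
      calc ⟪Matrix.toEuclideanLin (1 - Q) yv, yv⟫_ℂ
          = ⟪Matrix.toEuclideanLin (1 - Q) yv, Matrix.toEuclideanLin A₁ᴴ r⟫_ℂ := by
            rw [← hyv]
      _ = starRingEnd ℂ ⟪Matrix.toEuclideanLin A₁ᴴ r,
            Matrix.toEuclideanLin (1 - Q) yv⟫_ℂ := by rw [inner_conj_symm]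
      _ = starRingEnd ℂ ⟪r,
            Matrix.toEuclideanLin A₁ (Matrix.toEuclideanLin (1 - Q) yv)⟫_ℂ := by
            rw [hadj]
      _ = ⟪Matrix.toEuclideanLin A₁ (Matrix.toEuclideanLin (1 - Q) yv), r⟫_ℂ := by
            rw [inner_conj_symm]
      _ = 0 := h0
    have hqw : Matrix.toEuclideanLin Q (Matrix.toEuclideanLin (1 - Q) yv) = 0 := by
      rw [← eL_mul]
      have hq10 : Q * (1 - Q) = 0 := by
        rw [Matrix.mul_sub, Matrix.mul_one, hQQ, sub_self]
      rw [hq10]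
      exact eL_zero yv
    have hsplit : yv = Matrix.toEuclideanLin (1 - Q) yv + Matrix.toEuclideanLin Q yv := by
      rw [eL_sub, eL_one]
      abel
    have h2 : ⟪Matrix.toEuclideanLin (1 - Q) yv, Matrix.toEuclideanLin (1 - Q) yv⟫_ℂ
        = 0 := by
      have e3 : ⟪Matrix.toEuclideanLin (1 - Q) yv, Matrix.toEuclideanLin Q yv⟫_ℂ = 0 := by
        rw [← inner_eLconjT Q (Matrix.toEuclideanLin (1 - Q) yv) yv, hQh, hqw,
          inner_zero_left]
      have h4 := congrArg (fun v => ⟪Matrix.toEuclideanLin (1 - Q) yv, v⟫_ℂ) hsplit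
      simp only [inner_add_right] at h4
      rw [h1, e3, add_zero] at h4
      exact h4.symm
    have hw0 : Matrix.toEuclideanLin (1 - Q) yv = 0 := inner_self_eq_zero.mp h2
    rw [hBh, eL_mul, ← hyv]
    exact hw0
  set cv := Matrix.toEuclideanLin A₁d b₁ with hcv
  set dv := Matrix.toEuclideanLin A₂d b₂ with hdv
  set z := x - cv - Matrix.toEuclideanLin (1 - G * A₁) (dv - cv) with hz
  have hA₂dv : Matrix.toEuclideanLin A₂ dv = b₂ := by
    rw [hdv, ← eL_mul, ← hxfeas, ← eL_mul, c1]
  have hA₂P : A₂ * (1 - G * A₁) = A₂ := by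
    rw [Matrix.mul_sub, Matrix.mul_one, ← Matrix.mul_assoc, hA₂G, Matrix.zero_mul, sub_zero]
  have hzmem2 : Matrix.toEuclideanLin A₂ z = 0 := by
    rw [hz, map_sub, map_sub, ← eL_mul A₂ (1 - G * A₁) (dv - cv), hA₂P, map_sub, hxfeas, hA₂dv]
    abel
  have hq0 : Matrix.toEuclideanLin Q (x - dv) = 0 := by
    rw [hQdef, eL_mul, map_sub, hxfeas, hA₂dv, sub_self, map_zero]
  have h1q : Matrix.toEuclideanLin (1 - Q) (x - dv) = x - dv := by
    rw [eL_sub, eL_one, hq0, sub_zero]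
  have t1 : Matrix.toEuclideanLin A₁ (x - dv) = Matrix.toEuclideanLin B (x - dv) := by
    conv_lhs => rw [← h1q]
    rw [← eL_mul, ← hBdef]
  have t2 : Matrix.toEuclideanLin (B * (G * A₁)) (x - dv)
      = Matrix.toEuclideanLin B (x - dv) := by
    rw [eL_mul B (G * A₁) (x - dv), eL_mul G A₁ (x - dv), t1,
      ← eL_mul G B (x - dv), ← eL_mul B (G * B) (x - dv), ← Matrix.mul_assoc, g1]
  have s1 : Matrix.toEuclideanLin A₁ z = Matrix.toEuclideanLin A₁ (x - dv)
      + Matrix.toEuclideanLin (A₁ * (G * A₁)) (dv - cv) := by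
    rw [hz, eL_sub 1 (G * A₁) (dv - cv), eL_one, eL_mul A₁ (G * A₁) (dv - cv)]
    simp only [map_sub]
    abel
  have hBhAAd : Bᴴ * (A₁ * A₁d) = Bᴴ := by
    rw [hBh, Matrix.mul_assoc (1 - Q) A₁ᴴ (A₁ * A₁d), ← Matrix.mul_assoc A₁ᴴ A₁ A₁d,
      ← hTdef, hA1h]
  have s6 : Matrix.toEuclideanLin Bᴴ (Matrix.toEuclideanLin A₁ (x - cv)) = 0 := by
    rw [map_sub, map_sub, hcv, ← eL_mul A₁ A₁d b₁, ← eL_mul Bᴴ (A₁ * A₁d) b₁, hBhAAd,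
      ← map_sub, ← hrdef]
    exact horth
  have s5 : B * (G * A₁) = Gᴴ * (Bᴴ * A₁) := by
    rw [← Matrix.mul_assoc B G A₁, hBG', Matrix.mul_assoc]
  have hzmem1 : Matrix.toEuclideanLin A₁ z = 0 := by
    have s4 : Matrix.toEuclideanLin A₁ z = Matrix.toEuclideanLin (B * (G * A₁)) (x - cv) := by
      rw [s1, hA₁P, t1, ← t2, ← map_add]
      congr 1
      abel
    rw [s4, s5, eL_mul Gᴴ (Bᴴ * A₁) (x - cv), eL_mul Bᴴ A₁ (x - cv), s6, map_zero]
  refine ⟨z, Submodule.mem_inf.mpr ⟨hzmem1, hzmem2⟩, ?_⟩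
  rw [hz]
  abel
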